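/- In any finite simple graph H, the number of four-cycles of H is at least (1/2)·Σ_{e ∈ E(H)} t_e(t_e − 1)/2, where t_e denotes the number of triangles of H containing the edge e. -/

import Mathlib

/-- The number of ordered 4-tuples `(a,b,c,d)` of pairwise distinct vertices with
`a~b, b~c, c~d, d~a`.  Each four-cycle subgraph corresponds to exactly 8 such
tuples, so the number of four-cycles of `G` is this quantity divided by 8. -/
def orderedFourCycleCount {V : Type*} [Fintype V] [DecidableEq V]
    (G : SimpleGraph V) [DecidableRel G.Adj] : ℕ :=
  ((Finset.univ : Finset (V × V × V × V)).filter
    (fun p => p.1 ≠ p.2.1 ∧ p.1 ≠ p.2.2.1 ∧ p.1 ≠ p.2.2.2 ∧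
      p.2.1 ≠ p.2.2.1 ∧ p.2.1 ≠ p.2.2.2 ∧ p.2.2.1 ≠ p.2.2.2 ∧
      G.Adj p.1 p.2.1 ∧ G.Adj p.2.1 p.2.2.1 ∧ G.Adj p.2.2.1 p.2.2.2 ∧
      G.Adj p.2.2.2 p.1)).card

/-- For an edge `e` of `G`, the number `t_e` of triangles (3-cliques) of `G`
containing both endpoints of `e`. -/
def edgeTriangleCount {V : Type*} [Fintype V] [DecidableEq V]
    (G : SimpleGraph V) [DecidableRel G.Adj] (e : Sym2 V) : ℕ :=
  ((G.cliqueFinset 3).filter (fun T => ∀ v ∈ e, v ∈ T)).card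


open Finset

section Aux

variable {V : Type*} [Fintype V] [DecidableEq V] (H : SimpleGraph V) [DecidableRel H.Adj]

/-- common neighbors of `a` and `b`. -/
def cnFS (a b : V) : Finset V := univ.filter (fun c => H.Adj a c ∧ H.Adj b c)

omit [Fintype V] in
lemma sdiff_pair_nonempty {a b : V} (hab : a ≠ b) {T : Finset V} (hcard : T.card = 3)
    (ha : a ∈ T) (hb : b ∈ T) : (T \ {a, b}).Nonempty := by
  have hsub : ({a, b} : Finset V) ⊆ T := by
    intro x hx; simp at hx; rcases hx with rfl | rfl <;> assumption
  have hpair : ({a, b} : Finset V).card = 2 := by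
    rw [Finset.card_insert_of_notMem (by simp [hab]), Finset.card_singleton]
  rw [← Finset.card_pos, Finset.card_sdiff_of_subset hsub, hcard, hpair]; norm_num

omit [Fintype V] in
lemma triangle_eq' {a b : V} (hab : a ≠ b) {T : Finset V} (hcard : T.card = 3)
    (ha : a ∈ T) (hb : b ∈ T) (h : (T \ {a, b}).Nonempty) : T = {a, b, h.choose} := by
  have hc := h.choose_spec
  simp only [Finset.mem_sdiff, Finset.mem_insert, Finset.mem_singleton, not_or] at hc
  obtain ⟨hcT, hca, hcb⟩ := hc
  have hsub : ({a, b, h.choose} : Finset V) ⊆ T := by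
    intro x hx; simp at hx; rcases hx with rfl | rfl | rfl <;> assumption
  have hcard3 : ({a, b, h.choose} : Finset V).card = 3 := by
    rw [Finset.card_insert_of_notMem (by simp [hab, Ne.symm hca]),
      Finset.card_insert_of_notMem (by simp [Ne.symm hcb]), Finset.card_singleton]
  exact (Finset.eq_of_subset_of_card_le hsub (by rw [hcard, hcard3])).symm

lemma tri_le_cn {a b : V} (hab : H.Adj a b) :
    ((H.cliqueFinset 3).filter (fun T => ∀ v ∈ s(a, b), v ∈ T)).card ≤ (cnFS H a b).card := by
  classical
  apply Finset.card_le_card_of_injOn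
    (fun T => if h : (T \ {a, b}).Nonempty then h.choose else a)
  · intro T hT
    simp only [mem_coe, mem_filter, SimpleGraph.mem_cliqueFinset_iff] at hT
    obtain ⟨⟨hcl, hcard⟩, hmem⟩ := hT
    have ha : a ∈ T := hmem a (by simp)
    have hb : b ∈ T := hmem b (by simp)
    have hne := sdiff_pair_nonempty hab.ne hcard ha hb
    have hc := hne.choose_spec
    simp only [dif_pos hne]
    simp only [Finset.mem_sdiff, Finset.mem_insert, Finset.mem_singleton, not_or] at hc
    obtain ⟨hcT, hca, hcb⟩ := hc
    simp only [mem_coe, cnFS, mem_filter, mem_univ, true_and]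
    exact ⟨hcl ha hcT (fun h => hca h.symm), hcl hb hcT (fun h => hcb h.symm)⟩
  · intro T1 h1 T2 h2 heq
    simp only [coe_filter, Set.mem_setOf_eq, SimpleGraph.mem_cliqueFinset_iff] at h1 h2
    obtain ⟨⟨hcl1, hcard1⟩, hmem1⟩ := h1
    obtain ⟨⟨hcl2, hcard2⟩, hmem2⟩ := h2
    have hne1 := sdiff_pair_nonempty hab.ne hcard1 (hmem1 a (by simp)) (hmem1 b (by simp))
    have hne2 := sdiff_pair_nonempty hab.ne hcard2 (hmem2 a (by simp)) (hmem2 b (by simp))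
    simp only [dif_pos hne1, dif_pos hne2] at heq
    rw [triangle_eq' hab.ne hcard1 (hmem1 a (by simp)) (hmem1 b (by simp)) hne1,
      triangle_eq' hab.ne hcard2 (hmem2 a (by simp)) (hmem2 b (by simp)) hne2, heq]

/-- quadruples (a,b,c,d): a~b, c,d distinct common neighbors of a,b -/
def bookFS : Finset (V × V × V × V) :=
  Finset.univ.filter (fun p => H.Adj p.1 p.2.1 ∧ H.Adj p.1 p.2.2.1 ∧ H.Adj p.2.1 p.2.2.1
    ∧ H.Adj p.1 p.2.2.2 ∧ H.Adj p.2.1 p.2.2.2 ∧ p.2.2.1 ≠ p.2.2.2)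

lemma book_card_eq : (bookFS H).card =
    ∑ e ∈ H.edgeFinset, ((bookFS H).filter (fun p => s(p.1, p.2.1) = e)).card := by
  apply Finset.card_eq_sum_card_fiberwise
  rintro ⟨a, b, c, d⟩ hp
  simp only [mem_coe, bookFS, mem_filter, mem_univ, true_and] at hp
  simp only [mem_coe, SimpleGraph.mem_edgeFinset, SimpleGraph.mem_edgeSet]
  exact hp.1

lemma fiber_ge {a b : V} (hab : H.Adj a b) :
    2 * ((cnFS H a b).card * ((cnFS H a b).card - 1)) ≤
      ((bookFS H).filter (fun p => s(p.1, p.2.1) = s(a, b))).card := by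
  classical
  set P := cnFS H a b with hP
  set F1 : Finset (V × V × V × V) := P.offDiag.image (fun q => (a, b, q.1, q.2)) with hF1
  set F2 : Finset (V × V × V × V) := P.offDiag.image (fun q => (b, a, q.1, q.2)) with hF2
  have hmemP : ∀ c, c ∈ P ↔ H.Adj a c ∧ H.Adj b c := by
    intro c; simp [hP, cnFS]
  have hsub : F1 ∪ F2 ⊆ (bookFS H).filter (fun p => s(p.1, p.2.1) = s(a, b)) := by
    intro p hp
    simp only [hF1, hF2, Finset.mem_union, Finset.mem_image, Finset.mem_offDiag] at hp
    rw [mem_filter]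
    rcases hp with ⟨⟨c, d⟩, ⟨hc, hd, hcd⟩, rfl⟩ | ⟨⟨c, d⟩, ⟨hc, hd, hcd⟩, rfl⟩ <;>
      rw [hmemP] at hc hd
    · refine ⟨?_, rfl⟩
      simp only [bookFS, mem_filter, mem_univ, true_and]
      exact ⟨hab, hc.1, hc.2, hd.1, hd.2, hcd⟩
    · refine ⟨?_, Sym2.eq_swap⟩
      simp only [bookFS, mem_filter, mem_univ, true_and]
      exact ⟨hab.symm, hc.2, hc.1, hd.2, hd.1, hcd⟩
  have hdisj : Disjoint F1 F2 := by
    rw [Finset.disjoint_left]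
    rintro p hp1 hp2
    simp only [hF1, hF2, Finset.mem_image] at hp1 hp2
    obtain ⟨q, _, rfl⟩ := hp1
    obtain ⟨q', _, heq⟩ := hp2
    simp only [Prod.mk.injEq] at heq
    exact hab.ne heq.1.symm
  have hinj : ∀ (x y : V), Function.Injective (fun q : V × V => (x, y, q.1, q.2)) := by
    intro x y q q' h
    simp only [Prod.mk.injEq] at h
    exact Prod.ext h.2.2.1 h.2.2.2
  have hcard1 : F1.card = P.card * P.card - P.card := by
    rw [hF1, Finset.card_image_of_injective _ (hinj a b), Finset.offDiag_card]
  have hcard2 : F2.card = P.card * P.card - P.card := by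
    rw [hF2, Finset.card_image_of_injective _ (hinj b a), Finset.offDiag_card]
  have hx : P.card * (P.card - 1) = P.card * P.card - P.card := by
    rw [← Nat.pred_eq_sub_one, Nat.mul_pred]
  calc 2 * (P.card * (P.card - 1)) = F1.card + F2.card := by
        rw [hcard1, hcard2, hx, two_mul]
    _ = (F1 ∪ F2).card := (Finset.card_union_of_disjoint hdisj).symm
    _ ≤ _ := Finset.card_le_card hsub

end Aux

/-- In any finite simple graph `H`, the number of four-cycles of `H`
(the number of ordered four-cycle tuples divided by 8) is at least
`(1/2)·Σ_{e ∈ E(H)} t_e(t_e − 1)/2`, where `t_e` is the number of triangles of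
`H` containing the edge `e`. -/
theorem fourcycles_ge_triangle_pairs {V : Type*} [Fintype V] [DecidableEq V]
    (H : SimpleGraph V) [DecidableRel H.Adj] :
    (1 / 2 : ℝ) * ∑ e ∈ H.edgeFinset,
        ((edgeTriangleCount H e : ℝ) * ((edgeTriangleCount H e : ℝ) - 1) / 2)
      ≤ (orderedFourCycleCount H : ℝ) / 8 := by
  classical
  have hcast : ∀ n : ℕ, (n : ℝ) * ((n : ℝ) - 1) = ((n * (n - 1) : ℕ) : ℝ) := by
    intro n
    cases n with
    | zero => simp
    | succ k => push_cast [Nat.succ_sub_one]; ring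
  have book_le_cycles : (bookFS H).card ≤ orderedFourCycleCount H := by
    apply Finset.card_le_card_of_injOn (fun p => (p.1, p.2.2.1, p.2.1, p.2.2.2))
    · rintro ⟨a, b, c, d⟩ hp
      simp only [bookFS, mem_coe, mem_filter, mem_univ, true_and] at hp
      obtain ⟨hab, hac, hbc, had, hbd, hcd⟩ := hp
      simp only [mem_coe, orderedFourCycleCount, mem_filter, mem_univ, true_and]
      exact ⟨hac.ne, hab.ne, had.ne, (hbc.symm).ne, hcd, hbd.ne,
        hac, hbc.symm, hbd, had.symm⟩
    · rintro ⟨a, b, c, d⟩ _ ⟨a', b', c', d'⟩ _ heq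
      simp only [Prod.mk.injEq] at heq
      obtain ⟨h1, h2, h3, h4⟩ := heq
      simp [h1, h2, h3, h4]
  have hnat : 2 * ∑ e ∈ H.edgeFinset, edgeTriangleCount H e * (edgeTriangleCount H e - 1)
      ≤ orderedFourCycleCount H := by
    rw [Finset.mul_sum]
    calc ∑ e ∈ H.edgeFinset, 2 * (edgeTriangleCount H e * (edgeTriangleCount H e - 1))
        ≤ ∑ e ∈ H.edgeFinset, ((bookFS H).filter (fun p => s(p.1, p.2.1) = e)).card := by
          apply Finset.sum_le_sum
          intro e he
          induction e using Sym2.ind with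
          | _ a b =>
            rw [SimpleGraph.mem_edgeFinset, SimpleGraph.mem_edgeSet] at he
            have h1 : edgeTriangleCount H s(a, b) ≤ (cnFS H a b).card := tri_le_cn H he
            refine le_trans ?_ (fiber_ge H he)
            have h2 := Nat.mul_le_mul h1 (Nat.sub_le_sub_right h1 1)
            omega
      _ = (bookFS H).card := (book_card_eq H).symm
      _ ≤ orderedFourCycleCount H := book_le_cycles
  have hsum : ∑ e ∈ H.edgeFinset,
      ((edgeTriangleCount H e : ℝ) * ((edgeTriangleCount H e : ℝ) - 1))
      = ((∑ e ∈ H.edgeFinset, edgeTriangleCount H e * (edgeTriangleCount H e - 1) : ℕ) : ℝ) := by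
    rw [Nat.cast_sum]
    exact Finset.sum_congr rfl (fun e _ => hcast _)
  have hR : (2 : ℝ) *
      ((∑ e ∈ H.edgeFinset, edgeTriangleCount H e * (edgeTriangleCount H e - 1) : ℕ) : ℝ)
      ≤ (orderedFourCycleCount H : ℝ) := by
    have := (Nat.cast_le (α := ℝ)).mpr hnat
    push_cast at this ⊢
    linarith
  rw [show (∑ e ∈ H.edgeFinset,
      ((edgeTriangleCount H e : ℝ) * ((edgeTriangleCount H e : ℝ) - 1) / 2))
    = (∑ e ∈ H.edgeFinset,
      ((edgeTriangleCount H e : ℝ) * ((edgeTriangleCount H e : ℝ) - 1))) / 2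
    from (Finset.sum_div _ _ _).symm, hsum]
  linarith
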